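/- Let γ₁,…,γ_n ∈ ℝ^k (n ≥ 1), let c ∈ ℝ^k, and let μ : ℂ^n → ℝ^k be the map μ(z₁,…,z_n) = c + (1/2) Σ_{j=1}^n |z_j|² γ_j. Then μ is a proper map (preimages of compact sets are compact) if and only if there exists ξ ∈ ℝ^k with ⟨γ_j, ξ⟩ > 0 for every j, i.e., if and only if the list of weights γ₁,…,γ_n is polarized by some ξ. -/

import Mathlib

set_option maxHeartbeats 1600000


open MeasureTheory Set
open scoped RealInnerProductSpace

/-- Let `γ₁,…,γ_n ∈ ℝ^k` (`n ≥ 1`), `c ∈ ℝ^k`, and let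
`μ : ℂ^n → ℝ^k` be `μ(z) = c + (1/2) Σ_j |z_j|² γ_j`.  Then `μ` is a proper
map if and only if there exists `ξ ∈ ℝ^k` with `⟪γ_j, ξ⟫ > 0` for every `j`,
i.e. iff the list of weights is polarized by some `ξ`. -/
theorem stmt_6 (k n : ℕ) (hn : 1 ≤ n)
    (γ : Fin n → EuclideanSpace ℝ (Fin k)) (c : EuclideanSpace ℝ (Fin k)) :
    IsProperMap
      (fun z : Fin n → ℂ => c + (1 / 2 : ℝ) • ∑ j, (‖z j‖ ^ 2) • γ j) ↔
    ∃ ξ : EuclideanSpace ℝ (Fin k), ∀ j, 0 < ⟪γ j, ξ⟫ := by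
  haveI : NeZero n := ⟨Nat.one_le_iff_ne_zero.mp hn⟩
  set μ : (Fin n → ℂ) → EuclideanSpace ℝ (Fin k) :=
    fun z => c + (1 / 2 : ℝ) • ∑ j, (‖z j‖ ^ 2) • γ j with hμ
  have hcont : Continuous μ := by
    apply continuous_const.add
    exact (continuous_finset_sum _ fun j _ =>
      (((continuous_apply j : Continuous fun z : Fin n → ℂ => z j).norm.pow 2)).smul (continuous_const : Continuous fun _ : Fin n → ℂ => γ j)).const_smul (1 / 2 : ℝ)
  constructor
  · -- proper → polarized
    intro hproper
    by_contra hξ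
    push_neg at hξ
    -- first: 0 must be in the convex hull of the γ j
    have h0 : (0 : EuclideanSpace ℝ (Fin k)) ∈ convexHull ℝ (Set.range γ) := by
      by_contra h0
      obtain ⟨f, u, hfu, hub⟩ := geometric_hahn_banach_point_closed
        (convex_convexHull ℝ _) ((Set.finite_range γ).isClosed_convexHull (𝕜 := ℝ)) h0
      set ξ := (InnerProductSpace.toDual ℝ (EuclideanSpace ℝ (Fin k))).symm f with hξdef
      obtain ⟨j, hj⟩ := hξ ξ
      have : u < f (γ j) := hub _ (subset_convexHull ℝ _ (Set.mem_range_self j))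
      have hf0 : f 0 = 0 := map_zero f
      have hpos : (0 : ℝ) < f (γ j) := by
        have := hfu; rw [hf0] at this; linarith
      have hcontra : 0 < ⟪γ j, ξ⟫ := by
        rw [real_inner_comm, hξdef, InnerProductSpace.toDual_symm_apply]
        exact hpos
      exact absurd hcontra hj.not_gt
    -- extract convex combination
    rw [convexHull_range_eq_exists_affineCombination] at h0
    obtain ⟨s, w, hw0, hw1, hcomb⟩ := h0
    rw [Finset.affineCombination_eq_linear_combination _ _ _ hw1] at hcomb
    set t : Fin n → ℝ := fun i => if i ∈ s then w i else 0 with ht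
    have ht0 : ∀ i, 0 ≤ t i := fun i => by
      by_cases h : i ∈ s
      · simpa [ht, h] using hw0 i h
      · simp [ht, h]
    have ht1 : ∑ i, t i = 1 := by
      rw [ht]; rw [Finset.sum_ite_mem, Finset.univ_inter]; exact hw1
    have htγ : ∑ i, t i • γ i = 0 := by
      have step1 : ∑ i, t i • γ i = ∑ i, (if i ∈ s then w i • γ i else 0) :=
        Finset.sum_congr rfl fun i _ => by
          by_cases h : i ∈ s <;> simp [ht, h]
      rw [step1, Finset.sum_ite_mem, Finset.univ_inter]
      exact hcomb
    obtain ⟨j₀, hj₀⟩ : ∃ j, 0 < t j := by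
      by_contra h
      push_neg at h
      have : ∑ i, t i = 0 := Finset.sum_eq_zero fun i _ => le_antisymm (h i) (ht0 i)
      rw [ht1] at this; norm_num at this
    -- preimage of {c} is compact, hence bounded
    have hK : IsCompact (μ ⁻¹' {c}) := hproper.isCompact_preimage isCompact_singleton
    obtain ⟨R, hR⟩ := hK.isBounded.exists_norm_le
    -- build a point far away in the preimage
    set s₀ : ℝ := (R + 1) ^ 2 / t j₀ with hs₀
    have hs₀0 : 0 ≤ s₀ := div_nonneg (by positivity) hj₀.le
    set z : Fin n → ℂ := fun i => (Real.sqrt (s₀ * t i) : ℂ) with hz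
    have hnorm : ∀ i, ‖z i‖ ^ 2 = s₀ * t i := fun i => by
      rw [hz]
      simp only [Complex.norm_real, Real.norm_eq_abs, sq_abs]
      exact Real.sq_sqrt (mul_nonneg hs₀0 (ht0 i))
    have hmem : z ∈ μ ⁻¹' {c} := by
      simp only [Set.mem_preimage, Set.mem_singleton_iff, hμ]
      have : ∑ j, (‖z j‖ ^ 2) • γ j = (0 : EuclideanSpace ℝ (Fin k)) := by
        calc ∑ j, (‖z j‖ ^ 2) • γ j = s₀ • ∑ j, t j • γ j := by
              rw [Finset.smul_sum]
              exact Finset.sum_congr rfl fun j _ => by rw [hnorm j, mul_smul]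
          _ = 0 := by rw [htγ, smul_zero]
      rw [this, smul_zero, add_zero]
    have h1 : ‖z j₀‖ ≤ ‖z‖ := norm_le_pi_norm z j₀
    have hRz := hR z hmem
    have hR0 : 0 ≤ R := le_trans (norm_nonneg z) hRz
    have h2 : ‖z j₀‖ = R + 1 := by
      rw [hz]
      simp only [Complex.norm_real, Real.norm_eq_abs]
      rw [hs₀, div_mul_cancel₀ _ hj₀.ne']
      rw [abs_of_nonneg (Real.sqrt_nonneg _), Real.sqrt_sq (by linarith)]
    linarith
  · -- polarized → proper
    rintro ⟨ξ, hξ⟩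
    rw [isProperMap_iff_isCompact_preimage]
    refine ⟨hcont, fun K hK => ?_⟩
    obtain ⟨R, hR⟩ := hK.isBounded.exists_norm_le
    -- min of the pairings
    set m : ℝ := Finset.univ.inf' Finset.univ_nonempty fun j => ⟪γ j, ξ⟫ with hm
    have hm0 : 0 < m := by
      rw [hm, Finset.lt_inf'_iff]
      exact fun j _ => hξ j
    have hmle : ∀ j, m ≤ ⟪γ j, ξ⟫ := fun j =>
      Finset.inf'_le _ (Finset.mem_univ j)
    set B : ℝ := Real.sqrt (2 * (R * ‖ξ‖ - ⟪c, ξ⟫) / m) with hB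
    have hbound : ∀ z ∈ μ ⁻¹' K, ∀ j, ‖z j‖ ≤ B := by
      intro z hzmem j
      have hinner : ⟪μ z, ξ⟫ ≤ R * ‖ξ‖ := by
        calc ⟪μ z, ξ⟫ ≤ ‖μ z‖ * ‖ξ‖ := real_inner_le_norm _ _
          _ ≤ R * ‖ξ‖ := by
              exact mul_le_mul_of_nonneg_right (hR _ hzmem) (norm_nonneg _)
      have hexpand : ⟪μ z, ξ⟫
          = ⟪c, ξ⟫ + (1 / 2 : ℝ) * ∑ i, (‖z i‖ ^ 2) * ⟪γ i, ξ⟫ := by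
        rw [hμ]
        simp only [inner_add_left, real_inner_smul_left, sum_inner]
      have hterm : (‖z j‖ ^ 2) * m ≤ ∑ i, (‖z i‖ ^ 2) * ⟪γ i, ξ⟫ := by
        calc (‖z j‖ ^ 2) * m ≤ (‖z j‖ ^ 2) * ⟪γ j, ξ⟫ :=
              mul_le_mul_of_nonneg_left (hmle j) (by positivity)
          _ ≤ ∑ i, (‖z i‖ ^ 2) * ⟪γ i, ξ⟫ :=
              Finset.single_le_sum (f := fun i => (‖z i‖ ^ 2) * ⟪γ i, ξ⟫)
                (fun i _ => mul_nonneg (by positivity) (hξ i).le) (Finset.mem_univ j)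
      have hsq : ‖z j‖ ^ 2 ≤ 2 * (R * ‖ξ‖ - ⟪c, ξ⟫) / m := by
        rw [le_div_iff₀ hm0]
        nlinarith [hexpand, hinner, hterm]
      calc ‖z j‖ = Real.sqrt (‖z j‖ ^ 2) := by
            rw [Real.sqrt_sq (norm_nonneg _)]
        _ ≤ B := Real.sqrt_le_sqrt hsq
    have hsub : μ ⁻¹' K ⊆ Metric.closedBall 0 B := by
      intro z hz
      rw [Metric.mem_closedBall, dist_zero_right]
      have hBnn : 0 ≤ B := Real.sqrt_nonneg _
      exact pi_norm_le_iff_of_nonneg hBnn |>.mpr fun j => hbound z hz j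
    exact (isCompact_closedBall 0 B).of_isClosed_subset
      (hK.isClosed.preimage hcont) hsub
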